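/- For any vector r in F_2^n whose coset has leader weight w ≥ 1, there exists a vector r' with wt(r − r') = 1 whose coset leader weight is strictly smaller, i.e., wt(r̄') = wt(r̄) − 1. Consequently, the leader gradient descent decoding algorithm terminates: iterating this step reaches a vector in C after exactly w steps. -/

import Mathlib

/-- The minimal Hamming weight of an element of the coset `y + C`. -/
noncomputable def leaderWeight {n : ℕ} (C : Submodule (ZMod 2) (Fin n → ZMod 2))
    (y : Fin n → ZMod 2) : ℕ :=
  sInf {w : ℕ | ∃ v : Fin n → ZMod 2, v - y ∈ C ∧ hammingNorm v = w}

lemma lw_nonempty {n : ℕ} (C : Submodule (ZMod 2) (Fin n → ZMod 2)) (y : Fin n → ZMod 2) :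
    {w : ℕ | ∃ v : Fin n → ZMod 2, v - y ∈ C ∧ hammingNorm v = w}.Nonempty :=
  ⟨hammingNorm y, y, by simp, rfl⟩

lemma lw_le {n : ℕ} (C : Submodule (ZMod 2) (Fin n → ZMod 2)) {y v : Fin n → ZMod 2}
    (h : v - y ∈ C) : leaderWeight C y ≤ hammingNorm v :=
  Nat.sInf_le ⟨v, h, rfl⟩

lemma lw_mem {n : ℕ} (C : Submodule (ZMod 2) (Fin n → ZMod 2)) (y : Fin n → ZMod 2) :
    ∃ v : Fin n → ZMod 2, v - y ∈ C ∧ hammingNorm v = leaderWeight C y :=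
  Nat.sInf_mem (lw_nonempty C y)

lemma hn_single {n : ℕ} (i : Fin n) (c : ZMod 2) (hc : c ≠ 0) :
    hammingNorm (Pi.single i c : Fin n → ZMod 2) = 1 := by
  unfold hammingNorm
  have h : (Finset.filter (fun j => (Pi.single i c : Fin n → ZMod 2) j ≠ 0) Finset.univ) = ({i} : Finset (Fin n)) := by
    ext j
    simp only [Finset.mem_filter, Finset.mem_univ, true_and, Finset.mem_singleton]
    constructor
    · intro h; by_contra hj; simp [Pi.single_eq_of_ne hj] at h
    · rintro rfl; simpa using hc
  rw [h, Finset.card_singleton]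

lemma hn_sub_single {n : ℕ} (v : Fin n → ZMod 2) (i : Fin n) (hv : v i ≠ 0) :
    hammingNorm (v - Pi.single i (v i)) = hammingNorm v - 1 := by
  unfold hammingNorm
  have h : (Finset.filter (fun j => (v - Pi.single i (v i) : Fin n → ZMod 2) j ≠ 0) Finset.univ) = (Finset.filter (fun j => v j ≠ 0) Finset.univ) \ {i} := by
    ext j
    simp only [Finset.mem_filter, Finset.mem_univ, true_and, Finset.mem_sdiff, Finset.mem_singleton,
      Pi.sub_apply]
    rcases eq_or_ne j i with rfl | hj
    · simp
    · rw [Pi.single_eq_of_ne hj]; simp [hj]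
  rw [h, Finset.card_sdiff_of_subset (by simpa using hv), Finset.card_singleton]

lemma hn_add_le {n : ℕ} (x y : Fin n → ZMod 2) :
    hammingNorm (x + y) ≤ hammingNorm x + hammingNorm y := by
  have := hammingDist_triangle (x + y) y 0
  have e : -(x + y) + y = x := by
    funext i
    show -(x i + y i) + y i = x i
    generalize x i = a; generalize y i = b; revert a b; decide
  rwa [hammingDist_zero_right, hammingDist_zero_right, hammingDist_eq_hammingNorm,
    e] at this

lemma gdda_step {n : ℕ} (C : Submodule (ZMod 2) (Fin n → ZMod 2)) (r : Fin n → ZMod 2)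
    (hw : 1 ≤ leaderWeight C r) :
    ∃ r' : Fin n → ZMod 2, hammingNorm (r - r') = 1 ∧
      leaderWeight C r' = leaderWeight C r - 1 := by
  obtain ⟨v, hvC, hv⟩ := lw_mem C r
  have hv' : hammingNorm v = leaderWeight C r := hv
  have hvne : v ≠ 0 := by
    intro h; rw [h, hammingNorm_zero] at hv'; omega
  obtain ⟨i, hi⟩ := Function.ne_iff.mp hvne
  have hi : v i ≠ 0 := hi
  refine ⟨r - Pi.single i (v i), ?_, ?_⟩
  · rw [sub_sub_cancel, hn_single i (v i) hi]
  · apply le_antisymm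
    · have hmem : (v - Pi.single i (v i)) - (r - Pi.single i (v i)) ∈ C := by
        have : (v - Pi.single i (v i)) - (r - Pi.single i (v i)) = v - r := by abel
        rw [this]; exact hvC
      have h3 := lw_le C hmem
      have h4 := hn_sub_single v i hi
      omega
    · obtain ⟨u, huC, hu⟩ := lw_mem C (r - Pi.single i (v i))
      have hu' : hammingNorm u = leaderWeight C (r - Pi.single i (v i)) := hu
      have hmem : (u + Pi.single i (v i)) - r ∈ C := by
        have : (u + Pi.single i (v i)) - r = u - (r - Pi.single i (v i)) := by abel
        rw [this]; exact huC
      have h1 : leaderWeight C r ≤ hammingNorm (u + Pi.single i (v i)) := lw_le C hmem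
      have h2 : hammingNorm (u + Pi.single i (v i)) ≤ hammingNorm u + 1 := by
        have := hn_add_le u (Pi.single i (v i))
        rwa [hn_single i (v i) hi] at this
      omega

/-- One step of the leader GDDA always makes progress, and consequently the
algorithm terminates, reaching a codeword after exactly `w = leaderWeight C r`
steps. -/
theorem leader_gdda_terminates (n : ℕ) (C : Submodule (ZMod 2) (Fin n → ZMod 2))
    (r : Fin n → ZMod 2) (hw : 1 ≤ leaderWeight C r) :
    (∃ r' : Fin n → ZMod 2, hammingNorm (r - r') = 1 ∧
        leaderWeight C r' = leaderWeight C r - 1) ∧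
    (∃ f : ℕ → (Fin n → ZMod 2), f 0 = r ∧
        (∀ j < leaderWeight C r, hammingNorm (f j - f (j + 1)) = 1 ∧
          leaderWeight C (f (j + 1)) = leaderWeight C (f j) - 1) ∧
        f (leaderWeight C r) ∈ C) := by
  classical
  refine ⟨gdda_step C r hw, ?_⟩
  set g : (Fin n → ZMod 2) → (Fin n → ZMod 2) := fun x =>
    if h : 1 ≤ leaderWeight C x then Classical.choose (gdda_step C x h) else x with hg
  set f : ℕ → (Fin n → ZMod 2) := fun j => g^[j] r with hf
  have hstep : ∀ j, f (j + 1) = g (f j) := fun j => Function.iterate_succ_apply' g j r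
  have hinv : ∀ j, leaderWeight C (f j) = leaderWeight C r - j := by
    intro j
    induction j with
    | zero => simp [hf]
    | succ j ih =>
      rw [hstep j, hg]
      dsimp only
      by_cases h : 1 ≤ leaderWeight C (f j)
      · simp only [h, dif_pos]
        have := (Classical.choose_spec (gdda_step C (f j) h)).2
        rw [this, ih]; omega
      · rw [dif_neg h, ih]; omega
  refine ⟨f, rfl, ?_, ?_⟩
  · intro j hj
    have h1 : 1 ≤ leaderWeight C (f j) := by rw [hinv j]; omega
    have hspec := Classical.choose_spec (gdda_step C (f j) h1)
    have : f (j + 1) = Classical.choose (gdda_step C (f j) h1) := by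
      rw [hstep j, hg]; dsimp only; rw [dif_pos h1]
    rw [this]; exact hspec
  · have h0 : leaderWeight C (f (leaderWeight C r)) = 0 := by rw [hinv]; omega
    obtain ⟨v, hvC, hv⟩ := lw_mem C (f (leaderWeight C r))
    have hv0 : hammingNorm v = 0 := by rw [hv]; exact h0
    have : v = 0 := hammingNorm_eq_zero.mp hv0
    rw [this, zero_sub] at hvC
    simpa using C.neg_mem hvC
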